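/- The concentration set Z is minimal: if Y ⊆ {1,…,m} satisfies d(S) = d(S ∩ Y) for every S ⊆ {1,…,m}, then Z ⊆ Y. -/

import Mathlib

open Finset

attribute [local instance] Classical.propDecidable

/-- The `i`-th smallest (1-indexed) element of the multiset of p-values `{p_j : j ∈ I}`. -/
noncomputable def pOrd {m : ℕ} (p : Fin m → ℝ) (I : Finset (Fin m)) (i : ℕ) : ℝ :=
  ((I.val.map p).sort (· ≤ ·)).getD (i - 1) 0

/-- The Simes local test rejects `H_I` (written `I ∈ 𝒰`) iff `I` is nonempty and
`|I|·p_{(i:I)} ≤ i·α` for at least one `1 ≤ i ≤ |I|`. -/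
def SimesU {m : ℕ} (α : ℝ) (p : Fin m → ℝ) (I : Finset (Fin m)) : Prop :=
  ∃ i, 1 ≤ i ∧ i ≤ I.card ∧ (I.card : ℝ) * pOrd p I i ≤ (i : ℝ) * α

/-- Closed testing rejects `H_I` (written `I ∈ 𝒳`) iff `J ∈ 𝒰` for every `J ⊇ I`. -/
def ClosedX {m : ℕ} (α : ℝ) (p : Fin m → ℝ) (I : Finset (Fin m)) : Prop :=
  ∀ J, I ⊆ J → SimesU α p J

/-- `K_i = {r_{m−i+1},…,r_m}`: the `i` indices with largest p-values. -/
def Kset {m : ℕ} (r : Fin m → Fin m) (i : ℕ) : Finset (Fin m) :=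
  (Finset.univ.filter fun j : Fin m => m - i ≤ (j : ℕ)).image r

/-- `L_i = {r_1,…,r_i}`: the `i` indices with smallest p-values. -/
def Lset {m : ℕ} (r : Fin m → Fin m) (i : ℕ) : Finset (Fin m) :=
  (Finset.univ.filter fun j : Fin m => (j : ℕ) < i).image r

/-- `h = max{0 ≤ i ≤ m : K_i ∉ 𝒰}`. -/
noncomputable def hval {m : ℕ} (α : ℝ) (p : Fin m → ℝ) (r : Fin m → Fin m) : ℕ :=
  sSup {i | i ≤ m ∧ ¬ SimesU α p (Kset r i)}

/-- `t(S) = max{|I| : I ⊆ S, I ∉ 𝒳}`. -/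
noncomputable def tval {m : ℕ} (α : ℝ) (p : Fin m → ℝ) (S : Finset (Fin m)) : ℕ :=
  sSup {k | ∃ I, I ⊆ S ∧ ¬ ClosedX α p I ∧ I.card = k}

/-- `d(S) = |S| − t(S)`. -/
noncomputable def dval {m : ℕ} (α : ℝ) (p : Fin m → ℝ) (S : Finset (Fin m)) : ℕ :=
  S.card - tval α p S

/-- `q_α(S) = t(S)/|S|` for nonempty `S`, and `0` for `S = ∅`. -/
noncomputable def qval {m : ℕ} (α : ℝ) (p : Fin m → ℝ) (S : Finset (Fin m)) : ℝ :=
  if S = ∅ then 0 else (tval α p S : ℝ) / S.card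

/-- `z = 0` if `h = m`, else `z = min{m−h ≤ i ≤ m : h·p_{(i)} ≤ (i−m+h+1)·α}`. -/
noncomputable def zval {m : ℕ} (α : ℝ) (p : Fin m → ℝ) (r : Fin m → Fin m) : ℕ :=
  if hval α p r = m then 0 else
    sInf {i | m - hval α p r ≤ i ∧ i ≤ m ∧
      (hval α p r : ℝ) * pOrd p Finset.univ i ≤ ((i : ℝ) - m + hval α p r + 1) * α}

/-- `b_q = max{1 ≤ i ≤ m : m·p_{(i)} ≤ i·q}` (with `b_q = 0` if no such `i`). -/
noncomputable def bval {m : ℕ} (q : ℝ) (p : Fin m → ℝ) : ℕ :=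
  sSup {i | 1 ≤ i ∧ i ≤ m ∧ (m : ℝ) * pOrd p Finset.univ i ≤ (i : ℝ) * q}

/-! ### Auxiliary counting lemmas -/

lemma card_filter_fin (m : ℕ) (P : ℕ → Prop) (t : Finset ℕ)
    (ht : ∀ n, n ∈ t ↔ n < m ∧ P n) :
    (univ.filter fun j : Fin m => P (j:ℕ)).card = t.card := by
  refine Finset.card_nbij (fun a => (a : ℕ)) ?_ ?_ ?_
  · intro a ha; simp at ha; simp only [Finset.mem_coe]; rw [ht]; exact ⟨a.isLt, ha⟩
  · intro a _ b _ h; exact Fin.ext h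
  · intro b hb; simp at hb ⊢; rw [ht] at hb; exact ⟨⟨b, hb.1⟩, hb.2, rfl⟩

lemma card_filter_Ico (m a b : ℕ) :
    (univ.filter fun j : Fin m => a ≤ (j:ℕ) ∧ (j:ℕ) < b).card = min b m - a := by
  have h := (card_filter_fin m (fun x => a ≤ x ∧ x < b) (Finset.Ico a (min b m))
    (by intro n; simp [Finset.mem_Ico]; omega)).trans (Nat.card_Ico _ _)
  convert h using 2
  exact (Finset.filter_congr_decidable _ _ _).trans (Finset.filter_congr_decidable _ _ _).symm

lemma card_filter_lt (m c : ℕ) :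
    (univ.filter fun j : Fin m => (j:ℕ) < c).card = min c m := by
  have h := (card_filter_fin m (fun x => x < c) (Finset.range (min c m))
    (by intro n; simp; omega)).trans (Finset.card_range _)
  convert h using 2
  exact (Finset.filter_congr_decidable _ _ _).trans (Finset.filter_congr_decidable _ _ _).symm

lemma card_filter_le (m c : ℕ) :
    (univ.filter fun j : Fin m => c ≤ (j:ℕ)).card = m - c := by
  have h := (card_filter_fin m (fun x => c ≤ x) (Finset.Ico c m)
    (by intro n; simp [Finset.mem_Ico]; omega)).trans (Nat.card_Ico _ _)
  convert h using 2
  exact (Finset.filter_congr_decidable _ _ _).trans (Finset.filter_congr_decidable _ _ _).symm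

/-! ### Order statistics via counting -/

lemma sorted_getD_le_iff : ∀ (l : List ℝ), l.Pairwise (· ≤ ·) → ∀ i, i < l.length → ∀ v : ℝ,
    (l.getD i 0 ≤ v ↔ i < l.countP (fun x => decide (x ≤ v)))
  | [], _, i, hi, v => by simp at hi
  | a :: t, hs, i, hi, v => by
    rw [List.pairwise_cons] at hs
    match i with
    | 0 =>
      simp only [List.getD_cons_zero, List.countP_cons]
      constructor
      · intro h
        have : decide (a ≤ v) = true := by simpa using h
        rw [this]; simp
      · intro h
        by_contra hav
        have h0 : t.countP (fun x => decide (x ≤ v)) = 0 := by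
          apply List.countP_eq_zero.2
          intro x hx
          simp only [decide_eq_true_eq]
          intro hxv
          exact hav (le_trans (hs.1 x hx) hxv)
        have : decide (a ≤ v) = false := by simpa using hav
        rw [this] at h; rw [h0] at h; simp at h
    | (i+1) =>
      simp only [List.getD_cons_succ, List.countP_cons]
      have hi' : i < t.length := by simpa using hi
      rw [sorted_getD_le_iff t hs.2 i hi' v]
      by_cases hav : a ≤ v
      · have : decide (a ≤ v) = true := by simpa using hav
        rw [this]; simp
      · have h0 : t.countP (fun x => decide (x ≤ v)) = 0 := by
          apply List.countP_eq_zero.2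
          intro x hx
          simp only [decide_eq_true_eq]
          intro hxv
          exact hav (le_trans (hs.1 x hx) hxv)
        have : decide (a ≤ v) = false := by simpa using hav
        rw [this, h0]; simp

lemma pOrd_le_iff {m : ℕ} (p : Fin m → ℝ) (I : Finset (Fin m)) (k : ℕ)
    (hk1 : 1 ≤ k) (hk2 : k ≤ I.card) (v : ℝ) :
    pOrd p I k ≤ v ↔ k ≤ (I.filter fun x => p x ≤ v).card := by
  unfold pOrd
  set l := (I.val.map p).sort (· ≤ ·) with hl
  have hlen : l.length = I.card := by
    rw [hl, Multiset.length_sort, Multiset.card_map]; rfl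
  have hi : k - 1 < l.length := by omega
  rw [sorted_getD_le_iff l (Multiset.pairwise_sort _ _) _ hi v]
  have hc : l.countP (fun x => decide (x ≤ v)) = (I.filter fun x => p x ≤ v).card := by
    have h0 : ((l : Multiset ℝ)) = I.val.map p :=
      Multiset.sort_eq (r := fun x y : ℝ => x ≤ y) (I.val.map p)
    have h1 : Multiset.countP (fun x => x ≤ v) (I.val.map p)
        = l.countP (fun x => decide (x ≤ v)) := by
      rw [← h0]; exact Multiset.coe_countP (p := fun x => x ≤ v) _
    rw [← h1, Multiset.countP_map, Finset.card_def, Finset.filter_val]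
  rw [hc]; omega

lemma pOrd_le {m : ℕ} (p : Fin m → ℝ) (I : Finset (Fin m)) (k : ℕ)
    (hk1 : 1 ≤ k) (hk2 : k ≤ I.card) {v : ℝ}
    (h : k ≤ (I.filter fun x => p x ≤ v).card) : pOrd p I k ≤ v :=
  (pOrd_le_iff p I k hk1 hk2 v).2 h

lemma pOrd_count {m : ℕ} (p : Fin m → ℝ) (I : Finset (Fin m)) (k : ℕ)
    (hk1 : 1 ≤ k) (hk2 : k ≤ I.card) :
    k ≤ (I.filter fun x => p x ≤ pOrd p I k).card :=
  (pOrd_le_iff p I k hk1 hk2 _).1 le_rfl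

lemma le_pOrd {m : ℕ} (p : Fin m → ℝ) (I : Finset (Fin m)) (k : ℕ)
    (hk1 : 1 ≤ k) (hk2 : k ≤ I.card) {w : ℝ}
    (h : (I.filter fun x => p x < w).card < k) : w ≤ pOrd p I k := by
  by_contra hlt
  push_neg at hlt
  have h2 := pOrd_count p I k hk1 hk2
  have h3 : (I.filter fun x => p x ≤ pOrd p I k) ⊆ (I.filter fun x => p x < w) := by
    intro x hx
    simp only [mem_filter] at hx ⊢
    exact ⟨hx.1, lt_of_le_of_lt hx.2 hlt⟩
  have h4 := Finset.card_le_card h3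
  omega

lemma pOrd_nonneg {m : ℕ} (p : Fin m → ℝ) (hp : ∀ i, 0 ≤ p i) (I : Finset (Fin m)) (k : ℕ)
    (hk1 : 1 ≤ k) (hk2 : k ≤ I.card) : 0 ≤ pOrd p I k := by
  apply le_pOrd p I k hk1 hk2
  have : (I.filter fun x => p x < (0:ℝ)) = ∅ := by
    apply Finset.filter_false_of_mem
    intro x _
    exact not_lt.2 (hp x)
  rw [this]
  simp; omega

/-! ### Membership and cardinality of the index sets -/

lemma mem_Kset {m : ℕ} {r : Fin m → Fin m} (hr : Function.Injective r) {i : ℕ} {x : Fin m} :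
    x ∈ Kset r i ↔ ∃ j : Fin m, m - i ≤ (j:ℕ) ∧ r j = x := by
  simp [Kset, Finset.mem_image, Finset.mem_filter]

lemma mem_Lset {m : ℕ} {r : Fin m → Fin m} {i : ℕ} {x : Fin m} :
    x ∈ Lset r i ↔ ∃ j : Fin m, (j:ℕ) < i ∧ r j = x := by
  simp [Lset, Finset.mem_image, Finset.mem_filter]

lemma card_Kset {m : ℕ} {r : Fin m → Fin m} (hr : Function.Injective r) {i : ℕ} (hi : i ≤ m) :
    (Kset r i).card = i := by
  rw [Kset, Finset.card_image_of_injective _ hr, _root_.card_filter_le]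
  omega

lemma card_Lset {m : ℕ} {r : Fin m → Fin m} (hr : Function.Injective r) {i : ℕ} (hi : i ≤ m) :
    (Lset r i).card = i := by
  rw [Lset, Finset.card_image_of_injective _ hr, card_filter_lt]
  omega

lemma Lset_zero {m : ℕ} (r : Fin m → Fin m) : Lset r 0 = ∅ := by
  ext x; simp [mem_Lset]

lemma Kset_zero {m : ℕ} (r : Fin m → Fin m) : Kset r 0 = ∅ := by
  ext x
  simp only [Kset, Finset.mem_image, Finset.mem_filter, Finset.mem_univ, true_and,
    Finset.notMem_empty, iff_false]
  rintro ⟨j, hj, -⟩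
  omega

/-! ### Basic facts about SimesU / ClosedX -/

lemma not_simesU_empty {m : ℕ} (α : ℝ) (p : Fin m → ℝ) : ¬ SimesU α p (∅ : Finset (Fin m)) := by
  rintro ⟨i, hi1, hi2, -⟩
  simp at hi2
  omega

lemma not_closedX_empty {m : ℕ} (α : ℝ) (p : Fin m → ℝ) : ¬ ClosedX α p (∅ : Finset (Fin m)) :=
  fun h => not_simesU_empty α p (h ∅ (Finset.Subset.refl _))

lemma not_closedX_mono {m : ℕ} {α : ℝ} {p : Fin m → ℝ} {I I' : Finset (Fin m)}
    (h : I' ⊆ I) (hI : ¬ ClosedX α p I) : ¬ ClosedX α p I' :=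
  fun hC => hI (fun J hJ => hC J (h.trans hJ))

/-! ### tval and dval basics -/

lemma tval_set_nonempty {m : ℕ} (α : ℝ) (p : Fin m → ℝ) (S : Finset (Fin m)) :
    {k | ∃ I, I ⊆ S ∧ ¬ ClosedX α p I ∧ I.card = k}.Nonempty :=
  ⟨0, ∅, Finset.empty_subset S, not_closedX_empty α p, Finset.card_empty⟩

lemma tval_set_bdd {m : ℕ} (α : ℝ) (p : Fin m → ℝ) (S : Finset (Fin m)) :
    BddAbove {k | ∃ I, I ⊆ S ∧ ¬ ClosedX α p I ∧ I.card = k} := by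
  refine ⟨S.card, ?_⟩
  rintro k ⟨I, hIS, -, rfl⟩
  exact Finset.card_le_card hIS

lemma le_tval {m : ℕ} {α : ℝ} {p : Fin m → ℝ} {S I : Finset (Fin m)}
    (hIS : I ⊆ S) (hI : ¬ ClosedX α p I) : I.card ≤ tval α p S :=
  le_csSup (tval_set_bdd α p S) ⟨I, hIS, hI, rfl⟩

lemma tval_le_card {m : ℕ} (α : ℝ) (p : Fin m → ℝ) (S : Finset (Fin m)) :
    tval α p S ≤ S.card := by
  apply csSup_le (tval_set_nonempty α p S)
  rintro k ⟨I, hIS, -, rfl⟩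
  exact Finset.card_le_card hIS

lemma tval_witness {m : ℕ} (α : ℝ) (p : Fin m → ℝ) (S : Finset (Fin m)) :
    ∃ I, I ⊆ S ∧ ¬ ClosedX α p I ∧ I.card = tval α p S :=
  Nat.sSup_mem (tval_set_nonempty α p S) (tval_set_bdd α p S)

lemma tval_mono {m : ℕ} {α : ℝ} {p : Fin m → ℝ} {T S : Finset (Fin m)} (h : T ⊆ S) :
    tval α p T ≤ tval α p S := by
  obtain ⟨I, hIT, hI, hc⟩ := tval_witness α p T
  rw [← hc]
  exact le_tval (hIT.trans h) hI

lemma dval_mono {m : ℕ} {α : ℝ} {p : Fin m → ℝ} {T S : Finset (Fin m)} (h : T ⊆ S) :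
    dval α p T ≤ dval α p S := by
  obtain ⟨I, hIS, hI, hc⟩ := tval_witness α p S
  have h1 : (I ∩ T).card ≤ tval α p T :=
    le_tval (Finset.inter_subset_right) (not_closedX_mono Finset.inter_subset_left hI)
  have h2 : I.card ≤ (I ∩ T).card + (S.card - T.card) := by
    have e1 : (I ∩ T).card + (I \ T).card = I.card := Finset.card_inter_add_card_sdiff I T
    have e2 : (I \ T) ⊆ S \ T := Finset.sdiff_subset_sdiff hIS (Finset.Subset.refl T)
    have e3 := Finset.card_le_card e2
    have e4 : (S \ T).card = S.card - T.card := Finset.card_sdiff_of_subset h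
    omega
  have h3 := tval_le_card α p T
  have h4 := Finset.card_le_card h
  unfold dval
  omega

/-! ### Facts about `hval` -/

lemma hval_mem {m : ℕ} (α : ℝ) (p : Fin m → ℝ) (r : Fin m → Fin m) :
    hval α p r ≤ m ∧ ¬ SimesU α p (Kset r (hval α p r)) := by
  have hne : {i | i ≤ m ∧ ¬ SimesU α p (Kset r i)}.Nonempty :=
    ⟨0, Nat.zero_le m, by rw [Kset_zero]; exact not_simesU_empty α p⟩
  have hbdd : BddAbove {i | i ≤ m ∧ ¬ SimesU α p (Kset r i)} := ⟨m, fun i hi => hi.1⟩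
  exact Nat.sSup_mem hne hbdd

lemma simesU_Kset_of_gt {m : ℕ} {α : ℝ} {p : Fin m → ℝ} {r : Fin m → Fin m} {i : ℕ}
    (h1 : hval α p r < i) (h2 : i ≤ m) : SimesU α p (Kset r i) := by
  by_contra hcon
  have hbdd : BddAbove {i | i ≤ m ∧ ¬ SimesU α p (Kset r i)} := ⟨m, fun i hi => hi.1⟩
  have : i ≤ hval α p r := le_csSup hbdd ⟨h2, hcon⟩
  omega

/-- Every set with more than `h` elements is rejected by the Simes local test. -/
lemma simes_of_card_gt {m : ℕ} {α : ℝ} {p : Fin m → ℝ} {r : Fin m → Fin m}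
    (hr : Function.Bijective r) (hmono : ∀ i j : Fin m, i ≤ j → p (r i) ≤ p (r j))
    {J : Finset (Fin m)} (hJ : hval α p r < J.card) : SimesU α p J := by
  set s := J.card with hs
  have hsm : s ≤ m := by
    have := Finset.card_le_univ J
    simpa using this
  have hKs : SimesU α p (Kset r s) := simesU_Kset_of_gt hJ hsm
  obtain ⟨k, hk1, hk2, hineq⟩ := hKs
  rw [card_Kset hr.injective hsm] at hk2 hineq
  set v := pOrd p (Kset r s) k with hv
  have hKcnt : k ≤ ((Kset r s).filter fun x => p x ≤ v).card :=
    pOrd_count p (Kset r s) k hk1 (by rw [card_Kset hr.injective hsm]; exact hk2)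
  have hout : ∀ y, y ∉ Kset r s → p y ≤ v := by
    by_contra hc
    push_neg at hc
    obtain ⟨y, hyK, hyv⟩ := hc
    have hempty : ((Kset r s).filter fun x => p x ≤ v) = ∅ := by
      apply Finset.filter_false_of_mem
      intro x hxK
      obtain ⟨j, hjs, rfl⟩ := (mem_Kset hr.injective).1 hxK
      obtain ⟨j', rfl⟩ := hr.surjective y
      have hj' : (j':ℕ) < m - s := by
        by_contra hcc
        exact hyK ((mem_Kset hr.injective).2 ⟨j', by omega, rfl⟩)
      have hle : p (r j') ≤ p (r j) := hmono j' j (by rw [Fin.le_def]; omega)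
      intro hxle
      linarith
    rw [hempty] at hKcnt
    simp at hKcnt
    omega
  have hsub : (J.filter fun x => ¬ p x ≤ v) ⊆ ((Kset r s).filter fun x => ¬ p x ≤ v) := by
    intro x hx
    simp only [mem_filter] at hx ⊢
    refine ⟨?_, hx.2⟩
    by_contra hxK
    exact hx.2 (hout x hxK)
  have e1 := Finset.card_filter_add_card_filter_not (s := J) (p := fun x => p x ≤ v)
  have e2 := Finset.card_filter_add_card_filter_not (s := Kset r s)
    (p := fun x => p x ≤ v)
  have e3 := Finset.card_le_card hsub
  have e4 : (Kset r s).card = s := card_Kset hr.injective hsm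
  have key : k ≤ (J.filter fun x => p x ≤ v).card := by omega
  have pJ : pOrd p J k ≤ v := pOrd_le p J k hk1 (by omega) key
  refine ⟨k, hk1, by omega, ?_⟩
  have hmul : (s:ℝ) * pOrd p J k ≤ (s:ℝ) * v :=
    mul_le_mul_of_nonneg_left pJ (by positivity)
  rw [← hs]
  linarith

/-! ### The exact value of the order statistics of all p-values -/

lemma pOrd_univ {m : ℕ} {p : Fin m → ℝ} {r : Fin m → Fin m}
    (hr : Function.Bijective r) (hmono : ∀ i j : Fin m, i ≤ j → p (r i) ≤ p (r j))
    {i : ℕ} (h1 : 1 ≤ i) (h2 : i ≤ m) (hpf : i - 1 < m) :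
    pOrd p univ i = p (r ⟨i - 1, hpf⟩) := by
  have hcard : (univ : Finset (Fin m)).card = m := by simp
  apply le_antisymm
  · apply pOrd_le p _ i h1 (by omega)
    have hsub : (univ.filter fun l : Fin m => (l:ℕ) < i).image r ⊆
        univ.filter fun x => p x ≤ p (r ⟨i-1, hpf⟩) := by
      intro x hx
      obtain ⟨j, hj, rfl⟩ := Finset.mem_image.1 hx
      simp only [mem_filter, mem_univ, true_and] at hj ⊢
      exact hmono j ⟨i-1, hpf⟩ (by rw [Fin.le_def]; simp; omega)
    have hcc := Finset.card_le_card hsub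
    rw [Finset.card_image_of_injective _ hr.injective, card_filter_lt,
      min_eq_left h2] at hcc
    omega
  · apply le_pOrd p _ i h1 (by omega)
    have hsub : (univ.filter fun x => p x < p (r ⟨i-1, hpf⟩)) ⊆
        (univ.filter fun l : Fin m => (l:ℕ) < i - 1).image r := by
      intro x hx
      simp only [mem_filter, mem_univ, true_and] at hx
      obtain ⟨j, rfl⟩ := hr.surjective x
      refine Finset.mem_image.2 ⟨j, Finset.mem_filter.2 ⟨mem_univ _, ?_⟩, rfl⟩
      by_contra hcc
      exact absurd hx (not_lt.2 (hmono ⟨i-1,hpf⟩ j (by rw [Fin.le_def]; simp; omega)))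
    have hcc := Finset.card_le_card hsub
    rw [Finset.card_image_of_injective _ hr.injective, card_filter_lt,
      min_eq_left (by omega : i - 1 ≤ m)] at hcc
    omega

/-! ### Facts about `zval` -/

lemma zval_facts {m : ℕ} {α : ℝ} {p : Fin m → ℝ} {r : Fin m → Fin m}
    (hp : ∀ i, 0 ≤ p i)
    (hr : Function.Bijective r) (hmono : ∀ i j : Fin m, i ≤ j → p (r i) ≤ p (r j))
    (hhm : hval α p r < m) :
    (m - hval α p r ≤ zval α p r ∧ zval α p r ≤ m ∧
      (hval α p r : ℝ) * pOrd p Finset.univ (zval α p r)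
        ≤ ((zval α p r : ℝ) - m + hval α p r + 1) * α) ∧
    ∀ i, m - hval α p r ≤ i → i < zval α p r →
      ¬ ((hval α p r : ℝ) * pOrd p Finset.univ i ≤ ((i : ℝ) - m + hval α p r + 1) * α) := by
  set h := hval α p r with hh
  set Zs := {i | m - h ≤ i ∧ i ≤ m ∧
      (h : ℝ) * pOrd p Finset.univ i ≤ ((i : ℝ) - m + h + 1) * α} with hZs
  have hzeq : zval α p r = sInf Zs := by
    rw [zval, if_neg (by omega)]
  have hne : Zs.Nonempty := by
    have hK1 : SimesU α p (Kset r (h+1)) := simesU_Kset_of_gt (by omega) (by omega)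
    obtain ⟨k, hk1, hk2, hineq⟩ := hK1
    rw [card_Kset hr.injective (by omega)] at hk2 hineq
    set a := m - h - 1 + (k - 1) with ha
    have ham : a < m := by omega
    set w := p (r ⟨a, ham⟩) with hw
    have hwle : w ≤ pOrd p (Kset r (h+1)) k := by
      apply le_pOrd p _ k hk1 (by rw [card_Kset hr.injective (by omega)]; omega)
      have hsub : ((Kset r (h+1)).filter fun x => p x < w) ⊆
          (univ.filter fun l : Fin m => m - h - 1 ≤ (l:ℕ) ∧ (l:ℕ) < a).image r := by
        intro x hx
        simp only [mem_filter] at hx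
        obtain ⟨j, hjs, rfl⟩ := (mem_Kset hr.injective).1 hx.1
        refine Finset.mem_image.2 ⟨j, Finset.mem_filter.2 ⟨mem_univ _, ⟨by omega, ?_⟩⟩, rfl⟩
        by_contra hcc
        have hle : p (r ⟨a, ham⟩) ≤ p (r j) := hmono _ _ (by rw [Fin.le_def]; simp; omega)
        rw [← hw] at hle
        exact absurd hx.2 (not_lt.2 hle)
      have hc1 := Finset.card_le_card hsub
      rw [Finset.card_image_of_injective _ hr.injective, card_filter_Ico,
        min_eq_left (le_of_lt ham)] at hc1
      omega
    have hpu : pOrd p univ (a+1) = w := by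
      have hres := pOrd_univ hr hmono (i := a+1) (by omega) (by omega) (by omega)
      rw [hres, hw]
      congr 1
    have hcast : ((a+1:ℕ):ℝ) - m + h + 1 = (k:ℝ) := by
      have he : (a+1 : ℕ) = m - (h+1) + k := by omega
      rw [he]
      push_cast [Nat.cast_sub (show h+1 ≤ m by omega)]
      ring
    refine ⟨a+1, by omega, by omega, ?_⟩
    rw [hpu, hcast]
    have h0w : 0 ≤ w := hp _
    have hm1 : (h:ℝ)*w ≤ (h:ℝ)*pOrd p (Kset r (h+1)) k :=
      mul_le_mul_of_nonneg_left hwle (by positivity)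
    have hple : 0 ≤ pOrd p (Kset r (h+1)) k := le_trans h0w hwle
    have hcast2 : ((h+1:ℕ):ℝ) = (h:ℝ)+1 := by push_cast; ring
    rw [hcast2] at hineq
    linarith
  constructor
  · have hmem := Nat.sInf_mem hne
    rw [← hzeq] at hmem
    exact hmem
  · intro i hi1 hi2
    have hnotmem : i ∉ Zs := Nat.notMem_of_lt_sInf (by rw [← hzeq]; exact hi2)
    have hzmem := Nat.sInf_mem hne
    rw [← hzeq] at hzmem
    have him : i ≤ m := by
      have := hzmem.2.1
      omega
    intro hcon
    exact hnotmem ⟨hi1, him, hcon⟩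

/-! ### The key non-rejected witness set -/

lemma not_simes_J {m : ℕ} {α : ℝ} {p : Fin m → ℝ} {r : Fin m → Fin m}
    (hp : ∀ i, 0 ≤ p i)
    (hr : Function.Bijective r) (hmono : ∀ i j : Fin m, i ≤ j → p (r i) ≤ p (r j))
    (hhm : hval α p r < m) {j' : ℕ} (hj'm : j' < m)
    (hj1 : m - hval α p r - 1 ≤ j') (hj2 : j' < zval α p r) :
    ¬ SimesU α p ((Kset r (hval α p r + 1)).erase (r ⟨j', hj'm⟩)) := by
  obtain ⟨⟨hz1, hz2, hz3⟩, hzmin⟩ := zval_facts hp hr hmono hhm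
  generalize hh : hval α p r = h at hhm hj1 hz1 hz2 hz3 hzmin ⊢
  set J := (Kset r (h + 1)).erase (r ⟨j', hj'm⟩) with hJdef
  have hmemK : r ⟨j', hj'm⟩ ∈ Kset r (h+1) :=
    (mem_Kset hr.injective).2 ⟨⟨j', hj'm⟩, by simp; omega, rfl⟩
  have hcardJ : J.card = h := by
    rw [hJdef, Finset.card_erase_of_mem hmemK, card_Kset hr.injective (by omega)]
    omega
  rintro ⟨k, hk1, hk2, hineq⟩
  rw [hcardJ] at hk2 hineq
  by_cases hcase : k + (m - h - 1) ≤ j'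
  · -- low positions: contradict minimality of `z`
    set a := m - h - 1 + (k - 1) with ha
    have ham : a < m := by omega
    set w := p (r ⟨a, ham⟩) with hw
    have hwle : w ≤ pOrd p J k := by
      apply le_pOrd p _ k hk1 (by omega)
      have hsub : (J.filter fun x => p x < w) ⊆
          (univ.filter fun l : Fin m => m - h - 1 ≤ (l:ℕ) ∧ (l:ℕ) < a).image r := by
        intro x hx
        simp only [mem_filter] at hx
        obtain ⟨hxJ, hxw⟩ := hx
        rw [hJdef, Finset.mem_erase] at hxJ
        obtain ⟨j, hjs, rfl⟩ := (mem_Kset hr.injective).1 hxJ.2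
        refine Finset.mem_image.2 ⟨j, Finset.mem_filter.2 ⟨mem_univ _, ⟨by omega, ?_⟩⟩, rfl⟩
        by_contra hcc
        have hle : p (r ⟨a, ham⟩) ≤ p (r j) := hmono _ _ (by rw [Fin.le_def]; simp; omega)
        rw [← hw] at hle
        exact absurd hxw (not_lt.2 hle)
      have hc1 := Finset.card_le_card hsub
      rw [Finset.card_image_of_injective _ hr.injective, card_filter_Ico,
        min_eq_left (le_of_lt ham)] at hc1
      omega
    have hi2 : a + 1 < zval α p r := by omega
    have hmin := hzmin (a+1) (by omega) hi2
    have hpu : pOrd p univ (a+1) = w := by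
      have hres := pOrd_univ hr hmono (i := a+1) (by omega) (by omega) (by omega)
      rw [hres, hw]
      congr 1
    have hcast : ((a+1:ℕ):ℝ) - m + h + 1 = (k:ℝ) := by
      have he : (a+1 : ℕ) = m - (h+1) + k := by omega
      rw [he]
      push_cast [Nat.cast_sub (show h+1 ≤ m by omega)]
      ring
    rw [hpu, hcast] at hmin
    push_neg at hmin
    have hm1 : (h:ℝ)*w ≤ (h:ℝ)*pOrd p J k := mul_le_mul_of_nonneg_left hwle (by positivity)
    linarith
  · -- high positions: contradict non-rejection of `K_h`
    set a := m - h - 1 + k with ha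
    have ham : a < m := by omega
    set w := p (r ⟨a, ham⟩) with hw
    have hwle : w ≤ pOrd p J k := by
      apply le_pOrd p _ k hk1 (by omega)
      have hsub : (J.filter fun x => p x < w) ⊆
          ((univ.filter fun l : Fin m => m - h - 1 ≤ (l:ℕ) ∧ (l:ℕ) < a).erase
            ⟨j', hj'm⟩).image r := by
        intro x hx
        simp only [mem_filter] at hx
        obtain ⟨hxJ, hxw⟩ := hx
        rw [hJdef, Finset.mem_erase] at hxJ
        obtain ⟨j, hjs, rfl⟩ := (mem_Kset hr.injective).1 hxJ.2
        have hjne : j ≠ ⟨j', hj'm⟩ := fun hjj => hxJ.1 (by rw [hjj])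
        refine Finset.mem_image.2 ⟨j, Finset.mem_erase.2
          ⟨hjne, Finset.mem_filter.2 ⟨mem_univ _, ⟨by omega, ?_⟩⟩⟩, rfl⟩
        by_contra hcc
        have hle : p (r ⟨a, ham⟩) ≤ p (r j) := hmono _ _ (by rw [Fin.le_def]; simp; omega)
        rw [← hw] at hle
        exact absurd hxw (not_lt.2 hle)
      have hc1 := Finset.card_le_card hsub
      have hjmem : (⟨j', hj'm⟩ : Fin m) ∈
          univ.filter fun l : Fin m => m - h - 1 ≤ (l:ℕ) ∧ (l:ℕ) < a := by
        simp only [Finset.mem_filter, Finset.mem_univ, true_and]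
        omega
      rw [Finset.card_image_of_injective _ hr.injective, Finset.card_erase_of_mem hjmem,
        card_filter_Ico, min_eq_left (le_of_lt ham)] at hc1
      omega
    have hKh := (hval_mem α p r).2
    rw [hh] at hKh
    have hKhcard : (Kset r h).card = h := card_Kset hr.injective (by omega)
    have hKle : pOrd p (Kset r h) k ≤ w := by
      apply pOrd_le p _ k hk1 (by omega)
      have hsub2 : (univ.filter fun l : Fin m => m - h ≤ (l:ℕ) ∧ (l:ℕ) < a + 1).image r ⊆
          (Kset r h).filter fun x => p x ≤ w := by
        intro x hx
        obtain ⟨j, hj, rfl⟩ := Finset.mem_image.1 hx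
        simp only [mem_filter, mem_univ, true_and] at hj
        refine Finset.mem_filter.2 ⟨(mem_Kset hr.injective).2 ⟨j, by omega, rfl⟩, ?_⟩
        rw [hw]
        exact hmono _ _ (by rw [Fin.le_def]; simp; omega)
      have hc2 := Finset.card_le_card hsub2
      rw [Finset.card_image_of_injective _ hr.injective, card_filter_Ico,
        min_eq_left (by omega : a + 1 ≤ m)] at hc2
      omega
    have hKh2 : ¬ ((h:ℝ) * pOrd p (Kset r h) k ≤ (k:ℝ) * α) := by
      intro hcon
      exact hKh ⟨k, hk1, by omega, by rw [hKhcard]; exact hcon⟩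
    push_neg at hKh2
    have hm1 : (h:ℝ)*w ≤ (h:ℝ)*pOrd p J k := mul_le_mul_of_nonneg_left hwle (by positivity)
    have hm2 : (h:ℝ)*pOrd p (Kset r h) k ≤ (h:ℝ)*w := mul_le_mul_of_nonneg_left hKle (by positivity)
    linarith

/-! ### Upper bound for `t(L_z)` -/

lemma tval_Lz_le {m : ℕ} {α : ℝ} {p : Fin m → ℝ} {r : Fin m → Fin m}
    (hp : ∀ i, 0 ≤ p i)
    (hr : Function.Bijective r) (hmono : ∀ i j : Fin m, i ≤ j → p (r i) ≤ p (r j))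
    (hhm : hval α p r < m) :
    tval α p (Lset r (zval α p r)) ≤ zval α p r - (m - hval α p r) := by
  set h := hval α p r with hh
  obtain ⟨⟨hz1, hz2, hz3⟩, hzmin⟩ := zval_facts hp hr hmono hhm
  apply csSup_le (tval_set_nonempty α p _)
  rintro k ⟨I, hIL, hIX, rfl⟩
  by_contra hgt
  push_neg at hgt
  apply hIX
  intro J hIJ
  by_cases hJh : h < J.card
  · exact simes_of_card_gt hr hmono hJh
  · push_neg at hJh
    set k' := zval α p r - (m - h) + 1 with hk'
    have hk'card : k' ≤ I.card := by omega
    have hzm : 1 ≤ zval α p r := by omega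
    have hzm2 : zval α p r - 1 < m := by omega
    set v := p (r ⟨zval α p r - 1, hzm2⟩) with hv
    have hIv : I ⊆ J.filter fun x => p x ≤ v := by
      intro x hxI
      refine Finset.mem_filter.2 ⟨hIJ hxI, ?_⟩
      obtain ⟨j, hj, rfl⟩ := mem_Lset.1 (hIL hxI)
      rw [hv]
      exact hmono _ _ (by rw [Fin.le_def]; simp; omega)
    have hcnt := Finset.card_le_card hIv
    have hJcard : k' ≤ J.card := le_trans hk'card (Finset.card_le_card hIJ)
    have hPv : pOrd p J k' ≤ v := pOrd_le p J k' (by omega) hJcard (by omega)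
    refine ⟨k', by omega, hJcard, ?_⟩
    have hpu : pOrd p univ (zval α p r) = v :=
      pOrd_univ hr hmono (i := zval α p r) hzm (by omega) hzm2
    have hz3' : (h:ℝ) * v ≤ ((zval α p r : ℝ) - m + h + 1) * α := by
      rw [← hpu]; exact hz3
    have hcast : ((k' : ℕ) : ℝ) = (zval α p r : ℝ) - m + h + 1 := by
      rw [hk']
      push_cast [Nat.cast_sub (show m - h ≤ zval α p r from hz1),
        Nat.cast_sub (show h ≤ m by omega)]
      ring
    have hnn : 0 ≤ pOrd p J k' := pOrd_nonneg p hp J k' (by omega) hJcard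
    have hJh' : (J.card : ℝ) ≤ (h:ℝ) := by exact_mod_cast hJh
    have hfin : (J.card:ℝ) * pOrd p J k' ≤ (h:ℝ) * v := by nlinarith
    rw [hcast]
    linarith

theorem stmt8
    (m : ℕ) (hm : 1 ≤ m) (α : ℝ) (hα : 0 ≤ α ∧ α ≤ 1)
    (p : Fin m → ℝ) (hp : ∀ i, 0 ≤ p i ∧ p i ≤ 1)
    (r : Fin m → Fin m) (hr : Function.Bijective r)
    (hmono : ∀ i j : Fin m, i ≤ j → p (r i) ≤ p (r j))
    (Y : Finset (Fin m)) (hY : ∀ S, dval α p S = dval α p (S ∩ Y)) :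
    Lset r (zval α p r) ⊆ Y := by
  intro x hx
  by_contra hxY
  have hp' : ∀ i, 0 ≤ p i := fun i => (hp i).1
  -- z ≠ 0, hence h < m
  have hz0 : zval α p r ≠ 0 := by
    intro h0
    rw [h0, Lset_zero] at hx
    exact absurd hx (Finset.notMem_empty x)
  have hmlt : hval α p r < m := by
    rcases lt_or_eq_of_le (hval_mem α p r).1 with hlt | heq
    · exact hlt
    · exfalso; apply hz0; rw [zval, if_pos heq]
  obtain ⟨⟨hz1, hz2, hz3⟩, hzmin⟩ := zval_facts hp' hr hmono hmlt
  -- x = r j with j < z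
  obtain ⟨j, hjz, rfl⟩ := mem_Lset.1 hx
  -- the adjusted position j'
  obtain ⟨j', hj'def⟩ : ∃ t, t = max (j:ℕ) (m - hval α p r - 1) := ⟨_, rfl⟩
  have hj'm : j' < m := by rw [hj'def]; exact max_lt (by omega) (by omega)
  have hj1 : m - hval α p r - 1 ≤ j' := by rw [hj'def]; exact le_max_right _ _
  have hj2 : j' < zval α p r := by rw [hj'def]; exact max_lt hjz (by omega)
  have hNU := not_simes_J hp' hr hmono hmlt hj'm hj1 hj2
  -- the witness set avoiding x
  set Iw := ((univ.filter fun l : Fin m =>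
      m - hval α p r - 1 ≤ (l:ℕ) ∧ (l:ℕ) < zval α p r).erase ⟨j', hj'm⟩).image r with hIw
  have hIwJ : Iw ⊆ (Kset r (hval α p r + 1)).erase (r ⟨j', hj'm⟩) := by
    intro y hy
    obtain ⟨l, hl, rfl⟩ := Finset.mem_image.1 hy
    rw [Finset.mem_erase] at hl
    obtain ⟨hlne, hl2⟩ := hl
    simp only [mem_filter, mem_univ, true_and] at hl2
    exact Finset.mem_erase.2 ⟨fun hc => hlne (hr.injective hc),
      (mem_Kset hr.injective).2 ⟨l, by omega, rfl⟩⟩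
  have hIwX : ¬ ClosedX α p Iw := fun hC => hNU (hC _ hIwJ)
  have hIwL : Iw ⊆ Lset r (zval α p r) := by
    intro y hy
    obtain ⟨l, hl, rfl⟩ := Finset.mem_image.1 hy
    rw [Finset.mem_erase] at hl
    simp only [mem_filter, mem_univ, true_and] at hl
    exact mem_Lset.2 ⟨l, hl.2.2, rfl⟩
  have hxIw : r j ∉ Iw := by
    intro hc
    obtain ⟨l, hl, hle⟩ := Finset.mem_image.1 hc
    have hlj : l = j := hr.injective hle
    subst hlj
    rw [Finset.mem_erase] at hl
    simp only [mem_filter, mem_univ, true_and] at hl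
    apply hl.1
    have hjj : j' = (l:ℕ) := by rw [hj'def]; exact max_eq_left hl.2.1
    exact Fin.ext (by simp [hjj])
  have hIwcard : Iw.card = zval α p r - (m - hval α p r) := by
    have hjmem : (⟨j', hj'm⟩ : Fin m) ∈ univ.filter fun l : Fin m =>
        m - hval α p r - 1 ≤ (l:ℕ) ∧ (l:ℕ) < zval α p r := by
      simp only [Finset.mem_filter, Finset.mem_univ, true_and]
      omega
    rw [hIw, Finset.card_image_of_injective _ hr.injective, Finset.card_erase_of_mem hjmem,
      card_filter_Ico, min_eq_left hz2]
    omega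
  -- tval computations
  have htle := tval_Lz_le hp' hr hmono hmlt
  have hterase : zval α p r - (m - hval α p r) ≤
      tval α p ((Lset r (zval α p r)).erase (r j)) := by
    rw [← hIwcard]
    exact le_tval (fun y hy => Finset.mem_erase.2
      ⟨fun hc => hxIw (hc ▸ hy), hIwL hy⟩) hIwX
  have htE := le_trans (tval_mono (Finset.erase_subset (r j) (Lset r (zval α p r)))) htle
  have hZcard : (Lset r (zval α p r)).card = zval α p r := card_Lset hr.injective hz2
  have hecard : ((Lset r (zval α p r)).erase (r j)).card = zval α p r - 1 := by
    rw [Finset.card_erase_of_mem hx, hZcard]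
  have hsubYe : Lset r (zval α p r) ∩ Y ⊆ (Lset r (zval α p r)).erase (r j) := by
    intro y hy
    rw [Finset.mem_inter] at hy
    exact Finset.mem_erase.2 ⟨fun hc => hxY (hc ▸ hy.2), hy.1⟩
  have hd1 := dval_mono (α := α) (p := p) hsubYe
  have hdY := hY (Lset r (zval α p r))
  have hdchain : dval α p (Lset r (zval α p r)) ≤
      dval α p ((Lset r (zval α p r)).erase (r j)) := by
    rw [hdY]; exact hd1
  have htZ1 : zval α p r - (m - hval α p r) ≤ tval α p (Lset r (zval α p r)) :=
    le_trans hterase (tval_mono (Finset.erase_subset _ _))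
  unfold dval at hdchain
  rw [hZcard, hecard] at hdchain
  omega
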